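/- Let (X, r) be a near-rack solution with r(x,y) = (σ_x(y), τ(x)), and suppose the assignment x ↦ σ_x is injective (i.e. σ_x = σ_y implies x = y). Then σ_x(τ(x)) = x for every x ∈ X, and consequently the set of fixed points {(x,y) ∈ X × X : r(x,y) = (x,y)} has exactly |X| elements when X is finite. -/
import Mathlib


def rFst {X : Type*} (r : X × X → X × X) : X × X × X → X × X × X :=
  fun p => ((r (p.1, p.2.1)).1, (r (p.1, p.2.1)).2, p.2.2)

def rSnd {X : Type*} (r : X × X → X × X) : X × X × X → X × X × X :=
  fun p => (p.1, r (p.2.1, p.2.2))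

def IsYB {X : Type*} (r : X × X → X × X) : Prop :=
  rFst r ∘ rSnd r ∘ rFst r = rSnd r ∘ rFst r ∘ rSnd r

/-- `(X, r)` is a near-rack solution of the Yang–Baxter equation with data `σ, τ`:
a non-degenerate set-theoretic solution of the form `r (x, y) = (σ x y, τ x)`
with `τ ≠ id` and `τ² = id`. -/
structure IsNearRackSolution {X : Type*} (r : X × X → X × X)
    (σ : X → X → X) (τ : X → X) : Prop where
  hr : ∀ x y : X, r (x, y) = (σ x y, τ x)
  hYB : IsYB r
  hrbij : Function.Bijective r
  hσbij : ∀ x : X, Function.Bijective (σ x)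
  hτbij : Function.Bijective τ
  hτ2 : τ ∘ τ = id
  hτne : τ ≠ id

theorem stmt5 {X : Type*} [Finite X] (r : X × X → X × X) (σ : X → X → X) (τ : X → X)
    (h : IsNearRackSolution r σ τ)
    (hinj : Function.Injective σ) :
    (∀ x : X, σ x (τ x) = x) ∧
      Nat.card {p : X × X // r p = p} = Nat.card X := by
  have hττ : ∀ x, τ (τ x) = x := fun x => congrFun h.hτ2 x
  have h1 : ∀ x y z : X, σ (σ x y) (σ (τ x) z) = σ x (σ y z) := by
    intro x y z
    have := congrFun h.hYB (x, y, z)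
    simp only [Function.comp_apply, rFst, rSnd, h.hr] at this
    exact congrArg Prod.fst this
  have hfix : ∀ x : X, σ x (τ x) = x := by
    intro x
    apply hinj
    funext z
    obtain ⟨w, rfl⟩ := (h.hσbij (τ x)).2 z
    exact h1 x (τ x) w
  refine ⟨hfix, ?_⟩
  have e : {p : X × X // r p = p} ≃ X :=
    { toFun := fun p => p.1.1
      invFun := fun x => ⟨(x, τ x), by rw [h.hr, hfix]⟩
      left_inv := by
        rintro ⟨⟨x, y⟩, hp⟩
        rw [h.hr] at hp
        have : τ x = y := (Prod.mk.injEq _ _ _ _).mp hp |>.2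
        simp [this]
      right_inv := fun x => rfl }
  exact Nat.card_congr e
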